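/- Over F_2, define for each p-simplex σ ∈ X(Z_2^n) the chain [σ] = Σ_{σ' ~ σ} σ' in the simplicial p-chain group, and for σ = {α_1,...,α_{p+1}} with p ≥ 1 define d_p^D([σ]) = [(σ \ {α_1}) + α_1] + Σ_{i=1}^{p+1} [σ \ {α_i}]. Then d_p^D([σ]) is independent of the choice of the element α_1 ∈ σ and of the representative σ of its equivalence class; hence d_p^D is well-defined. -/

import Mathlib

open Finset

attribute [local instance] Classical.propDecidable

abbrev V (n : ℕ) : Type := Fin n → ZMod 2

def LinIndep {n : ℕ} (s : Finset (V n)) : Prop :=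
  LinearIndependent (ZMod 2) (fun x : (s : Set (V n)) => (x : V n))

def IsSimplex (n p : ℕ) (σ : Finset (V n)) : Prop :=
  σ.card = p + 1 ∧ LinIndep σ

def shift {n : ℕ} (σ : Finset (V n)) (α : V n) : Finset (V n) :=
  σ.image (· + α)

def SimpRel {n : ℕ} (σ σ' : Finset (V n)) : Prop :=
  σ = σ' ∨ ∃ α : V n, σ ∩ σ' = {α} ∧ shift (σ \ {α}) α = σ' \ {α}

/-- The class sum `[σ] = ∑_{σ' ~ σ} σ'`, a simplicial chain over `F_2`. -/
noncomputable def classSum {n : ℕ} (σ : Finset (V n)) : Finset (V n) →₀ ZMod 2 :=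
  ∑ σ' ∈ Finset.univ.filter (fun σ' => SimpRel σ σ'), Finsupp.single σ' 1

/-- The value `d_p^D([σ])` computed using the chosen element `α ∈ σ`:
`[(σ \ {α}) + α] + ∑_{β ∈ σ} [σ \ {β}]`. -/
noncomputable def dDat {n : ℕ} (σ : Finset (V n)) (α : V n) : Finset (V n) →₀ ZMod 2 :=
  classSum (shift (σ \ {α}) α) + ∑ β ∈ σ, classSum (σ \ {β})

lemma addSelf {n : ℕ} (x : V n) : x + x = 0 := by
  funext i; exact CharTwo.add_self_eq_zero _

lemma mem_shift {n : ℕ} {s : Finset (V n)} {α x : V n} :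
    x ∈ shift s α ↔ x + α ∈ s := by
  simp only [shift, mem_image]
  constructor
  · rintro ⟨y, hy, rfl⟩; rwa [add_assoc, addSelf, add_zero]
  · intro h; exact ⟨x + α, h, by rw [add_assoc, addSelf, add_zero]⟩

lemma shift_shift {n : ℕ} (s : Finset (V n)) (α β : V n) :
    shift (shift s α) β = shift s (α + β) := by
  ext x
  rw [mem_shift, mem_shift, mem_shift, add_assoc, add_comm β α]

lemma shift_shift_self {n : ℕ} (s : Finset (V n)) (α : V n) :
    shift (shift s α) α = s := by
  rw [shift_shift, addSelf]; simp [shift]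

lemma shift_sdiff {n : ℕ} (s t : Finset (V n)) (α : V n) :
    shift (s \ t) α = shift s α \ shift t α :=
  Finset.image_sdiff _ _ (add_left_injective α)

lemma shift_singleton {n : ℕ} (a α : V n) : shift ({a} : Finset (V n)) α = {a + α} := by
  simp [shift]

lemma shift_insert {n : ℕ} (a : V n) (s : Finset (V n)) (α : V n) :
    shift (insert a s) α = insert (a + α) (shift s α) := by
  simp [shift, Finset.image_insert]

lemma shift_subset {n : ℕ} {s t : Finset (V n)} (h : s ⊆ t) (α : V n) :
    shift s α ⊆ shift t α := Finset.image_subset_image h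

lemma sum_shift {n : ℕ} (s : Finset (V n)) (α : V n) :
    ∑ x ∈ shift s α, x = (∑ x ∈ s, x) + s.card • α := by
  rw [shift, Finset.sum_image (fun a _ b _ h => add_left_injective α h)]
  rw [Finset.sum_add_distrib, Finset.sum_const]

lemma card_shift {n : ℕ} (s : Finset (V n)) (α : V n) : (shift s α).card = s.card :=
  Finset.card_image_of_injective _ (add_left_injective α)

lemma nsmul_parity {n : ℕ} (c : ℕ) (x : V n) : c • x = if Even c then 0 else x := by
  induction c with
  | zero => simp
  | succ k ih =>
    rw [succ_nsmul, ih]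
    by_cases h : Even k <;> simp [h, Nat.even_add_one, addSelf]

lemma zmodcases (a : ZMod 2) : a = 0 ∨ a = 1 := by revert a; decide

lemma sum_coe_set {n : ℕ} (σ : Finset (V n)) (f : V n → V n) :
    ∑ i : (σ : Set (V n)), f i = ∑ i ∈ σ, f i := by
  rw [← Finset.sum_coe_sort σ f]
  exact Fintype.sum_equiv (Equiv.subtypeEquivRight (fun x => by simp)) _ _ (fun i => rfl)

lemma linIndep_iff {n : ℕ} (σ : Finset (V n)) :
    LinIndep σ ↔ ∀ t ⊆ σ, t.Nonempty → ∑ x ∈ t, x ≠ 0 := by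
  rw [LinIndep, Fintype.linearIndependent_iff]
  constructor
  · intro H t ht hne hsum
    obtain ⟨a, ha⟩ := hne
    have key : ∑ i : (σ : Set (V n)), (if (i : V n) ∈ t then (1 : ZMod 2) else 0) • (i : V n) = 0 := by
      rw [sum_coe_set σ (fun x => (if x ∈ t then (1 : ZMod 2) else 0) • x)]
      rw [← Finset.sum_filter_add_sum_filter_not σ (· ∈ t)]
      have h1 : σ.filter (· ∈ t) = t := by
        ext x; simp only [mem_filter]; exact ⟨fun h => h.2, fun h => ⟨ht h, h⟩⟩
      have h2 : ∀ x ∈ σ.filter (· ∈ t), (if x ∈ t then (1 : ZMod 2) else 0) • x = x := by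
        intro x hx; simp [(mem_filter.1 hx).2]
      have h3 : ∀ x ∈ σ.filter (¬ · ∈ t), (if x ∈ t then (1 : ZMod 2) else 0) • x = 0 := by
        intro x hx; simp [(mem_filter.1 hx).2]
      rw [Finset.sum_congr rfl h2, Finset.sum_congr rfl h3, h1, hsum]
      simp
    have := H _ key ⟨a, ht ha⟩
    simp only [ha, if_true] at this
    exact one_ne_zero this
  · intro H g hg i
    by_contra hi
    have hgi : g i = 1 := (zmodcases (g i)).resolve_left hi
    set t : Finset (V n) := σ.filter (fun x => ∃ h : x ∈ (σ : Set (V n)), g ⟨x, h⟩ = 1) with htdef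
    have ht : t ⊆ σ := filter_subset _ _
    have hne : t.Nonempty := ⟨i, by
      refine mem_filter.2 ⟨by simpa using i.2, ⟨i.2, ?_⟩⟩
      simpa using hgi⟩
    refine H t ht hne ?_
    have h2 : ∀ x ∈ t, (fun x => if h : x ∈ (σ : Set (V n)) then g ⟨x, h⟩ • x else 0) x = x := by
      intro x hx
      obtain ⟨hxσ, hmem, hg1⟩ := mem_filter.1 hx
      simp [hmem, hg1]
    have h3 : ∀ x ∈ σ.filter (fun x => ¬ ∃ h : x ∈ (σ : Set (V n)), g ⟨x, h⟩ = 1),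
        (fun x => if h : x ∈ (σ : Set (V n)) then g ⟨x, h⟩ • x else 0) x = 0 := by
      intro x hx
      obtain ⟨hxσ, hng⟩ := mem_filter.1 hx
      have hxσ' : x ∈ (σ : Set (V n)) := by simpa using hxσ
      have : g ⟨x, hxσ'⟩ = 0 := by
        rcases zmodcases (g ⟨x, hxσ'⟩) with h0 | h1
        · exact h0
        · exact absurd ⟨hxσ', h1⟩ hng
      simp only [dif_pos hxσ', this, zero_smul]
    calc ∑ x ∈ t, x
        = ∑ x ∈ σ, (fun x => if h : x ∈ (σ : Set (V n)) then g ⟨x, h⟩ • x else 0) x := by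
          rw [← Finset.sum_filter_add_sum_filter_not σ
            (fun x => ∃ h : x ∈ (σ : Set (V n)), g ⟨x, h⟩ = 1), ← htdef,
            Finset.sum_congr rfl h2, Finset.sum_congr rfl h3, Finset.sum_const_zero, add_zero]
      _ = ∑ i : (σ : Set (V n)), (fun x => if h : x ∈ (σ : Set (V n)) then g ⟨x, h⟩ • x else 0) (i : V n) :=
          (sum_coe_set σ _).symm
      _ = ∑ i : (σ : Set (V n)), g i • (i : V n) :=
          Fintype.sum_congr _ _ (fun i => by simp only [dif_pos i.2])
      _ = 0 := hg

lemma linIndep_mono {n : ℕ} {σ τ : Finset (V n)} (h : σ ⊆ τ) (hτ : LinIndep τ) :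
    LinIndep σ :=
  (linIndep_iff σ).2 fun t ht hne => (linIndep_iff τ).1 hτ t (ht.trans h) hne

lemma zero_not_mem {n : ℕ} {σ : Finset (V n)} (h : LinIndep σ) : (0 : V n) ∉ σ := by
  intro h0
  exact (linIndep_iff σ).1 h {0} (by simpa) ⟨0, mem_singleton_self 0⟩ (by simp)

lemma not2 {n : ℕ} {σ : Finset (V n)} (h : LinIndep σ) {a b : V n}
    (ha : a ∈ σ) (hb : b ∈ σ) (hab : a ≠ b) : a + b ≠ 0 := by
  intro h0
  refine (linIndep_iff σ).1 h {a, b} ?_ ⟨a, by simp⟩ ?_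
  · intro x hx; rcases mem_insert.1 hx with rfl | hx
    · exact ha
    · rw [mem_singleton.1 hx]; exact hb
  · rw [Finset.sum_insert (by simp [hab]), Finset.sum_singleton, h0]

lemma not3 {n : ℕ} {σ : Finset (V n)} (h : LinIndep σ) {a b c : V n}
    (ha : a ∈ σ) (hb : b ∈ σ) (hc : c ∈ σ)
    (hab : a ≠ b) (hac : a ≠ c) (hbc : b ≠ c) : a + b + c ≠ 0 := by
  intro h0
  refine (linIndep_iff σ).1 h {a, b, c} ?_ ⟨a, by simp⟩ ?_
  · intro x hx
    rcases mem_insert.1 hx with rfl | hx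
    · exact ha
    rcases mem_insert.1 hx with rfl | hx
    · exact hb
    · rw [mem_singleton.1 hx]; exact hc
  · rw [Finset.sum_insert (by simp [hab, hac]), Finset.sum_insert (by simp [hbc]),
      Finset.sum_singleton, ← add_assoc, h0]

lemma not4 {n : ℕ} {σ : Finset (V n)} (h : LinIndep σ) {a b c d : V n}
    (ha : a ∈ σ) (hb : b ∈ σ) (hc : c ∈ σ) (hd : d ∈ σ)
    (hab : a ≠ b) (hac : a ≠ c) (had : a ≠ d) (hbc : b ≠ c) (hbd : b ≠ d)
    (hcd : c ≠ d) : a + b + c + d ≠ 0 := by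
  intro h0
  refine (linIndep_iff σ).1 h {a, b, c, d} ?_ ⟨a, by simp⟩ ?_
  · intro x hx
    rcases mem_insert.1 hx with rfl | hx
    · exact ha
    rcases mem_insert.1 hx with rfl | hx
    · exact hb
    rcases mem_insert.1 hx with rfl | hx
    · exact hc
    · rw [mem_singleton.1 hx]; exact hd
  · rw [Finset.sum_insert (by simp [hab, hac, had]), Finset.sum_insert (by simp [hbc, hbd]),
      Finset.sum_insert (by simp [hcd]), Finset.sum_singleton, ← add_assoc, ← add_assoc, h0]

/-- `σ_α`, the flipped simplex. -/
def sflip {n : ℕ} (σ : Finset (V n)) (α : V n) : Finset (V n) :=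
  insert α (shift (σ \ {α}) α)

lemma sum3zero {n : ℕ} (x α : V n) : x + (x + α) + α = 0 := by
  have : x + (x + α) + α = (x + x) + (α + α) := by ring
  rw [this, addSelf, addSelf, add_zero]

lemma alpha_not_mem_shift {n : ℕ} {σ : Finset (V n)} {α : V n}
    (h0 : (0 : V n) ∉ σ) : α ∉ shift (σ \ {α}) α := by
  intro hmem
  rw [mem_shift, addSelf] at hmem
  exact h0 (mem_sdiff.1 hmem).1

lemma sflip_sdiff {n : ℕ} {σ : Finset (V n)} {α : V n} (h0 : (0 : V n) ∉ σ) :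
    sflip σ α \ {α} = shift (σ \ {α}) α := by
  rw [sflip, ← Finset.erase_eq, Finset.erase_insert (alpha_not_mem_shift h0)]

lemma mem_sflip_self {n : ℕ} (σ : Finset (V n)) (α : V n) : α ∈ sflip σ α :=
  mem_insert_self _ _

lemma mem_sflip_of {n : ℕ} {σ : Finset (V n)} {s α : V n} (hs : s ∈ σ) (hsα : s ≠ α) :
    s + α ∈ sflip σ α := by
  refine mem_insert_of_mem (mem_shift.2 ?_)
  rw [add_assoc, addSelf, add_zero, mem_sdiff, mem_singleton]
  exact ⟨hs, hsα⟩

-- L1: characterization of SimpRel for linearly independent σ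
lemma simpRel_iff {n : ℕ} {σ : Finset (V n)} (hσ : LinIndep σ) (τ : Finset (V n)) :
    SimpRel σ τ ↔ τ = σ ∨ ∃ α ∈ σ, τ = sflip σ α := by
  have h0 : (0 : V n) ∉ σ := zero_not_mem hσ
  constructor
  · rintro (rfl | ⟨α, hint, hsh⟩)
    · exact Or.inl rfl
    · have hmemint : α ∈ σ ∩ τ := by rw [hint]; exact mem_singleton_self α
      obtain ⟨hασ, hατ⟩ := mem_inter.1 hmemint
      refine Or.inr ⟨α, hασ, ?_⟩
      rw [sflip, hsh, ← Finset.erase_eq, Finset.insert_erase hατ]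
  · rintro (rfl | ⟨α, hα, rfl⟩)
    · exact Or.inl rfl
    · refine Or.inr ⟨α, ?_, (sflip_sdiff h0).symm⟩
      ext x
      simp only [mem_inter, mem_singleton]
      constructor
      · rintro ⟨hxσ, hxf⟩
        rcases mem_insert.1 hxf with rfl | hxs
        · rfl
        · by_contra hxα
          rw [mem_shift] at hxs
          obtain ⟨hmem, hne⟩ := mem_sdiff.1 hxs
          rw [mem_singleton] at hne
          have hxxα : x ≠ x + α := by
            intro hh
            have : α = 0 := (add_eq_left).1 hh.symm
            exact h0 (this ▸ hα)
          exact not3 hσ hxσ hmem hα hxxα hxα hne (sum3zero x α)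
      · intro h
        subst h
        exact ⟨hα, mem_sflip_self _ _⟩

-- L2: the flipped set is linearly independent
lemma linIndep_sflip {n : ℕ} {σ : Finset (V n)} {α : V n} (hσ : LinIndep σ)
    (hα : α ∈ σ) : LinIndep (sflip σ α) := by
  have h0 : (0 : V n) ∉ σ := zero_not_mem hσ
  rw [linIndep_iff]
  intro t ht hne hsum
  set u : Finset (V n) := shift (t \ {α}) α with hu_def
  have htα : t \ {α} ⊆ shift (σ \ {α}) α := by
    calc t \ {α} ⊆ sflip σ α \ {α} := Finset.sdiff_subset_sdiff ht (le_refl _)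
      _ = shift (σ \ {α}) α := sflip_sdiff h0
  have hu : u ⊆ σ \ {α} := by
    have := shift_subset htα α
    rwa [shift_shift_self] at this
  have huσ : u ⊆ σ := hu.trans (Finset.sdiff_subset)
  have hαu : α ∉ u := fun hc => (mem_sdiff.1 (hu hc)).2 (mem_singleton_self α)
  have htαu : t \ {α} = shift u α := by rw [hu_def, shift_shift_self]
  have hsum2 : ∑ x ∈ t \ {α}, x = (∑ x ∈ u, x) + u.card • α := by
    rw [htαu, sum_shift]
  have hins : ∀ (h : (∑ x ∈ u, x) + α = 0), False := by
    intro h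
    refine (linIndep_iff σ).1 hσ (insert α u) ?_ ⟨α, mem_insert_self _ _⟩ ?_
    · exact Finset.insert_subset hα huσ
    · rw [Finset.sum_insert hαu, add_comm, h]
  have huone : ∀ (h : (∑ x ∈ u, x) = 0), u.Nonempty → False := by
    intro h hune
    exact (linIndep_iff σ).1 hσ u huσ hune h
  by_cases hαt : α ∈ t
  · have htsplit : ∑ x ∈ t, x = α + ∑ x ∈ t \ {α}, x := by
      rw [← Finset.erase_eq, ← Finset.add_sum_erase t _ hαt]
    rw [htsplit, hsum2] at hsum
    by_cases hc : Even u.card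
    · rw [nsmul_parity, if_pos hc, add_zero] at hsum
      exact hins (by rwa [add_comm] at hsum)
    · rw [nsmul_parity, if_neg hc] at hsum
      have : ∑ x ∈ u, x = 0 := by
        have h2 : α + ((∑ x ∈ u, x) + α) = (∑ x ∈ u, x) + (α + α) := by ring
        rw [hsum, addSelf, add_zero] at h2
        exact h2.symm
      have hune : u.Nonempty := by
        rcases Finset.eq_empty_or_nonempty u with he | hne'
        · rw [he] at hc; simp at hc
        · exact hne'
      exact huone this hune
  · have htsplit : t \ {α} = t := by
      rw [← Finset.erase_eq, Finset.erase_eq_of_notMem hαt]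
    rw [← htsplit, hsum2] at hsum
    by_cases hc : Even u.card
    · rw [nsmul_parity, if_pos hc, add_zero] at hsum
      have hune : u.Nonempty := by
        have : (t \ {α}).Nonempty := htsplit.symm ▸ hne
        rw [htαu] at this
        obtain ⟨x, hx⟩ := this
        exact ⟨x + α, mem_shift.1 hx⟩
      exact huone hsum hune
    · rw [nsmul_parity, if_neg hc] at hsum
      exact hins hsum

-- L3a
lemma sflip_sflip {n : ℕ} {σ : Finset (V n)} {α : V n} (h0 : (0 : V n) ∉ σ)
    (hα : α ∈ σ) : sflip (sflip σ α) α = σ := by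
  rw [sflip, sflip_sdiff h0, shift_shift_self, ← Finset.erase_eq,
    Finset.insert_erase hα]

-- L3b
lemma sflip_sflip' {n : ℕ} {σ : Finset (V n)} {α s : V n} (h0 : (0 : V n) ∉ σ)
    (hα : α ∈ σ) (hs : s ∈ σ) (hsα : s ≠ α) :
    sflip (sflip σ α) (s + α) = sflip σ s := by
  have hs0 : s ≠ 0 := fun h => h0 (h ▸ hs)
  have hαsα : α ∉ ({s + α} : Finset (V n)) := by
    rw [mem_singleton]
    intro h
    exact hs0 (by rwa [right_eq_add] at h)
  have key1 : sflip σ α \ {s + α} = insert α (shift ((σ \ {α}) \ {s}) α) := by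
    rw [sflip, Finset.insert_sdiff_of_notMem _ hαsα]
    congr 1
    have : shift ((σ \ {α}) \ {s}) α = shift (σ \ {α}) α \ {s + α} := by
      rw [shift_sdiff, shift_singleton]
    exact this.symm
  have key2 : α + (s + α) = s := by
    have : α + (s + α) = s + (α + α) := by ring
    rw [this, addSelf, add_zero]
  rw [sflip, key1, shift_insert, key2, shift_shift, key2]
  have hασs : α ∈ σ \ {s} :=
    mem_sdiff.2 ⟨hα, fun h => hsα (mem_singleton.1 h).symm⟩
  have key3 : σ \ {s} = insert α ((σ \ {s}) \ {α}) := by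
    rw [← Finset.erase_eq (σ \ {s}), Finset.insert_erase hασs]
  rw [sflip, key3, shift_insert, sdiff_right_comm, Finset.insert_comm,
    add_comm α s]

lemma simpRel_sflip {n : ℕ} {σ : Finset (V n)} {α : V n} (hσ : LinIndep σ)
    (hα : α ∈ σ) : SimpRel σ (sflip σ α) :=
  (simpRel_iff hσ _).2 (Or.inr ⟨α, hα, rfl⟩)

lemma simpRel_congr {n : ℕ} {σ : Finset (V n)} {α : V n} (hσ : LinIndep σ)
    (hα : α ∈ σ) (x : Finset (V n)) : SimpRel σ x ↔ SimpRel (sflip σ α) x := by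
  have h0 : (0 : V n) ∉ σ := zero_not_mem hσ
  have hf : LinIndep (sflip σ α) := linIndep_sflip hσ hα
  rw [simpRel_iff hσ, simpRel_iff hf]
  constructor
  · rintro (rfl | ⟨β, hβ, rfl⟩)
    · exact Or.inr ⟨α, mem_sflip_self _ _, (sflip_sflip h0 hα).symm⟩
    · by_cases hβα : β = α
      · subst hβα; exact Or.inl rfl
      · exact Or.inr ⟨β + α, mem_sflip_of hβ hβα, (sflip_sflip' h0 hα hβ hβα).symm⟩
  · rintro (rfl | ⟨δ, hδ, rfl⟩)
    · exact Or.inr ⟨α, hα, rfl⟩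
    · rcases mem_insert.1 hδ with rfl | hδs
      · exact Or.inl (sflip_sflip h0 hα)
      · rw [mem_shift] at hδs
        obtain ⟨hmem, hne⟩ := mem_sdiff.1 hδs
        rw [mem_singleton] at hne
        have hδeq : δ = (δ + α) + α := by
          rw [add_assoc, addSelf, add_zero]
        refine Or.inr ⟨δ + α, hmem, ?_⟩
        rw [hδeq, sflip_sflip' h0 hα hmem hne, ← hδeq]

lemma classSum_eq {n : ℕ} {σ τ : Finset (V n)} (hσ : LinIndep σ) (h : SimpRel σ τ) :
    classSum σ = classSum τ := by
  rcases (simpRel_iff hσ τ).1 h with rfl | ⟨α, hα, rfl⟩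
  · rfl
  · unfold classSum
    congr 1
    ext x
    simp only [mem_filter, mem_univ, true_and]
    exact simpRel_congr hσ hα x

lemma dDat_alpha {n : ℕ} {σ : Finset (V n)} {α α' : V n} (hσ : LinIndep σ)
    (hα : α ∈ σ) (hα' : α' ∈ σ) : dDat σ α = dDat σ α' := by
  by_cases heq : α = α'
  · rw [heq]
  have h0 : (0 : V n) ∉ σ := zero_not_mem hσ
  have hli : LinIndep (shift (σ \ {α}) α) :=
    linIndep_mono (Finset.subset_insert _ _) (linIndep_sflip hσ hα)
  have hrel : SimpRel (shift (σ \ {α}) α) (shift (σ \ {α'}) α') := by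
    refine Or.inr ⟨α + α', ?_, ?_⟩
    · ext x
      simp only [mem_inter, mem_singleton, mem_shift]
      constructor
      · rintro ⟨hxα, hxα'⟩
        obtain ⟨hs, hsne⟩ := mem_sdiff.1 hxα
        obtain ⟨ht, htne⟩ := mem_sdiff.1 hxα'
        rw [mem_singleton] at hsne htne
        by_contra hx
        have hsα' : x + α ≠ α' := by
          intro hh
          apply hx
          have : x = α' + α := by
            have := congrArg (· + α) hh
            simpa [add_assoc, addSelf] using this
          rw [this, add_comm]
        have htα : x + α' ≠ α := by
          intro hh
          apply hx
          have := congrArg (· + α') hh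
          simpa [add_assoc, addSelf] using this
        have hst : x + α ≠ x + α' := by
          intro hh
          exact heq (add_left_cancel hh)
        have hsum : (x + α) + (x + α') + α + α' = 0 := by
          have : (x + α) + (x + α') + α + α' = (x + x) + ((α + α) + (α' + α')) := by ring
          rw [this, addSelf, addSelf, addSelf, add_zero, add_zero]
        exact not4 hσ hs ht hα hα' hst hsne hsα' htα htne heq hsum
      · rintro rfl
        constructor
        · refine mem_sdiff.2 ⟨?_, ?_⟩
          · have : α + α' + α = α' := by
              have : α + α' + α = α' + (α + α) := by ring
              rw [this, addSelf, add_zero]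
            rw [this]; exact hα'
          · rw [mem_singleton]
            intro hh
            have : α + α' + α = α' := by
              have : α + α' + α = α' + (α + α) := by ring
              rw [this, addSelf, add_zero]
            rw [this] at hh
            exact heq hh.symm
        · refine mem_sdiff.2 ⟨?_, ?_⟩
          · have : α + α' + α' = α := by
              have : α + α' + α' = α + (α' + α') := by ring
              rw [this, addSelf, add_zero]
            rw [this]; exact hα
          · rw [mem_singleton]
            intro hh
            have : α + α' + α' = α := by
              have : α + α' + α' = α + (α' + α') := by ring
              rw [this, addSelf, add_zero]
            rw [this] at hh
            exact heq hh
    · have e1 : ({α + α'} : Finset (V n)) = shift {α'} α := by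
        rw [shift_singleton, add_comm]
      have e2 : ({α + α'} : Finset (V n)) = shift {α} α' := by
        rw [shift_singleton]
      have hkey : α + (α + α') = α' := by
        have : α + (α + α') = (α + α) + α' := by ring
        rw [this, addSelf, zero_add]
      calc shift (shift (σ \ {α}) α \ {α + α'}) (α + α')
          = shift (shift ((σ \ {α}) \ {α'}) α) (α + α') := by rw [e1, ← shift_sdiff]
        _ = shift ((σ \ {α}) \ {α'}) (α + (α + α')) := shift_shift _ _ _
        _ = shift ((σ \ {α'}) \ {α}) α' := by rw [sdiff_right_comm, hkey]
        _ = shift (σ \ {α'}) α' \ {α + α'} := by rw [shift_sdiff, ← e2]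
  rw [dDat, dDat, classSum_eq hli hrel]

lemma dDat_rep {n : ℕ} {σ : Finset (V n)} {γ : V n} (hσ : LinIndep σ) (hγ : γ ∈ σ) :
    dDat σ γ = dDat (sflip σ γ) γ := by
  have h0 : (0 : V n) ∉ σ := zero_not_mem hσ
  set S : Finset (V n) := shift (σ \ {γ}) γ with hS
  have hγS : γ ∉ S := alpha_not_mem_shift h0
  have hfd : sflip σ γ \ {γ} = S := sflip_sdiff h0
  -- first term of RHS
  have hfirst : shift (sflip σ γ \ {γ}) γ = σ \ {γ} := by
    rw [hfd, hS, shift_shift_self]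
  -- each face of the flip matches a face of σ
  have hface : ∀ s ∈ σ \ {γ}, sflip σ γ \ {s + γ} = sflip (σ \ {s}) γ := by
    intro s hs
    obtain ⟨hsσ, hsγ⟩ := mem_sdiff.1 hs
    rw [mem_singleton] at hsγ
    have hs0 : s ≠ 0 := fun h => h0 (h ▸ hsσ)
    have hγne : γ ∉ ({s + γ} : Finset (V n)) := by
      rw [mem_singleton]
      intro h
      exact hs0 (by rwa [right_eq_add] at h)
    rw [sflip, Finset.insert_sdiff_of_notMem _ hγne, sflip]
    congr 1
    have : shift ((σ \ {γ}) \ {s}) γ = shift (σ \ {γ}) γ \ {s + γ} := by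
      rw [shift_sdiff, shift_singleton]
    rw [← this, sdiff_right_comm]
  have hclass : ∀ s ∈ σ \ {γ}, classSum (sflip σ γ \ {s + γ}) = classSum (σ \ {s}) := by
    intro s hs
    obtain ⟨hsσ, hsγ⟩ := mem_sdiff.1 hs
    rw [mem_singleton] at hsγ
    have hli : LinIndep (σ \ {s}) := linIndep_mono (Finset.sdiff_subset) hσ
    have hγmem : γ ∈ σ \ {s} :=
      mem_sdiff.2 ⟨hγ, fun h => hsγ (mem_singleton.1 h).symm⟩
    rw [hface s hs]
    exact (classSum_eq hli (simpRel_sflip hli hγmem)).symm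
  -- sum over the flip
  have hsumflip : ∑ b ∈ sflip σ γ, classSum (sflip σ γ \ {b})
      = classSum S + ∑ s ∈ σ \ {γ}, classSum (σ \ {s}) := by
    calc ∑ b ∈ sflip σ γ, classSum (sflip σ γ \ {b})
        = classSum (sflip σ γ \ {γ}) + ∑ x ∈ S, classSum (sflip σ γ \ {x}) :=
          Finset.sum_insert hγS
      _ = classSum S + ∑ s ∈ σ \ {γ}, classSum (sflip σ γ \ {s + γ}) := by
          rw [hfd]
          congr 1
          exact Finset.sum_image (fun a _ b _ h => add_left_injective γ h)
      _ = classSum S + ∑ s ∈ σ \ {γ}, classSum (σ \ {s}) := by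
          congr 1
          exact Finset.sum_congr rfl hclass
  -- sum over σ
  have hsumσ : ∑ b ∈ σ, classSum (σ \ {b})
      = classSum (σ \ {γ}) + ∑ s ∈ σ \ {γ}, classSum (σ \ {s}) := by
    rw [← Finset.add_sum_erase σ _ hγ, Finset.erase_eq]
  rw [dDat, dDat, hfirst, hsumflip, hsumσ, ← hS]
  abel

theorem stmt4' {n : ℕ} {σ σ' : Finset (V n)} (hσ : LinIndep σ)
    (h : SimpRel σ σ') {α : V n} (hα : α ∈ σ) {β : V n} (hβ : β ∈ σ') :
    dDat σ α = dDat σ' β := by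
  rcases (simpRel_iff hσ σ').1 h with rfl | ⟨γ, hγ, rfl⟩
  · exact dDat_alpha hσ hα hβ
  · have hli' : LinIndep (sflip σ γ) := linIndep_sflip hσ hγ
    calc dDat σ α = dDat σ γ := dDat_alpha hσ hα hγ
      _ = dDat (sflip σ γ) γ := dDat_rep hσ hγ
      _ = dDat (sflip σ γ) β := dDat_alpha hli' (mem_sflip_self σ γ) hβ

/-- `d_p^D([σ])` is independent of the chosen element of `σ` and of the
chosen representative of the equivalence class of `σ`; hence `d_p^D` is well defined. -/
theorem stmt4 (n p : ℕ) (hp : 1 ≤ p) (σ σ' : Finset (V n)) (hσ : IsSimplex n p σ)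
    (h : SimpRel σ σ') (α : V n) (hα : α ∈ σ) (β : V n) (hβ : β ∈ σ') :
    dDat σ α = dDat σ' β :=
  stmt4' hσ.2 h hα hβ
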